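/- Let (X_n)_{n∈ℕ} be a uniform sequence of Lip-spaces and 𝒰 a free ultrafilter on ℕ. Then the Lip-ultraproduct ℓ∞_L(X_n, 𝒰), endowed with the quotient norm ‖·‖_𝒰 and the quotient Lip-norm ‖·‖_{L,𝒰}, is itself a Lip-space; in particular the set {x_𝒰 ∈ ℓ∞_L(X_n,𝒰) : ‖x_𝒰‖_{L,𝒰} ≤ 1} is compact in the quotient norm. Moreover the radius of this Lip-space equals lim_𝒰 R_n, where R_n is the radius of X_n. -/

import Mathlib

open scoped ENNReal NNReal
open Filter

structure LipSpace (X : Type*) [NormedAddCommGroup X] [NormedSpace ℝ X] [CompleteSpace X] where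
  lipNorm : X → ℝ≥0∞
  lipNorm_add_le : ∀ x y : X, lipNorm (x + y) ≤ lipNorm x + lipNorm y
  lipNorm_smul : ∀ (c : ℝ) (x : X), lipNorm (c • x) = (‖c‖₊ : ℝ≥0∞) * lipNorm x
  lipNorm_eq_zero : ∀ x : X, lipNorm x = 0 → x = 0
  dense_finite : Dense {x : X | lipNorm x < ⊤}
  isCompact_unitBall : IsCompact {x : X | lipNorm x ≤ 1}

theorem LipSpace.lipNorm_zero {X : Type*} [NormedAddCommGroup X] [NormedSpace ℝ X]
    [CompleteSpace X] (S : LipSpace X) : S.lipNorm 0 = 0 := by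
  have h := S.lipNorm_smul 0 0
  simpa using h

variable (X : ℕ → Type*) [∀ n, NormedAddCommGroup (X n)] [∀ n, NormedSpace ℝ (X n)]
  [∀ n, CompleteSpace (X n)] (S : ∀ n, LipSpace (X n))

/-- The submodule of `ℓ∞(X_n)` of sequences with uniformly bounded Lip-norms. -/
noncomputable def finLip : Submodule ℝ (lp (fun n => X n) ⊤) where
  carrier := {f | ∃ C : ℝ≥0, ∀ n, (S n).lipNorm (f n) ≤ C}
  zero_mem' := ⟨0, fun n => by
    have h0 : ((0 : lp (fun n => X n) ⊤) : ∀ m, X m) n = 0 := by simp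
    rw [h0, (S n).lipNorm_zero]
    simp⟩
  add_mem' := by
    rintro f g ⟨C, hC⟩ ⟨D, hD⟩
    refine ⟨C + D, fun n => ?_⟩
    have h1 : (S n).lipNorm ((f + g : lp (fun n => X n) ⊤) n) ≤
        (S n).lipNorm (f n) + (S n).lipNorm (g n) := by
      have : (f + g : lp (fun n => X n) ⊤) n = f n + g n := by
        simp [lp.coeFn_add]
      rw [this]; exact (S n).lipNorm_add_le _ _
    refine h1.trans ?_
    push_cast
    exact add_le_add (hC n) (hD n)
  smul_mem' := by
    rintro c f ⟨C, hC⟩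
    refine ⟨‖c‖₊ * C, fun n => ?_⟩
    have : (c • f : lp (fun n => X n) ⊤) n = c • (f n) := by
      simp [lp.coeFn_smul]
    rw [this, (S n).lipNorm_smul]
    push_cast
    exact mul_le_mul_of_nonneg_left (hC n) (zero_le)

/-- ℓ∞_L(X_n): the norm closure in `ℓ∞(X_n)` of the bounded sequences with uniformly
bounded Lip-norms. -/
noncomputable def lipClosure : Submodule ℝ (lp (fun n => X n) ⊤) :=
  (finLip X S).topologicalClosure

variable (U : Ultrafilter ℕ)

/-- The null subspace of `ℓ∞_L(X_n)` relative to the ultrafilter `U`. -/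
noncomputable def nullU : Submodule ℝ ↥(lipClosure X S) where
  carrier := {f | Tendsto (fun n => ‖(f : lp (fun n => X n) ⊤) n‖) (U : Filter ℕ) (nhds 0)}
  zero_mem' := by
    simp only [Set.mem_setOf_eq, Submodule.coe_zero, lp.coeFn_zero]
    simp only [Pi.zero_apply, norm_zero]
    exact tendsto_const_nhds
  add_mem' := by
    intro f g hf hg
    have hsum : Tendsto (fun n => ‖(f : lp (fun n => X n) ⊤) n‖ +
        ‖(g : lp (fun n => X n) ⊤) n‖) (U : Filter ℕ) (nhds 0) := by
      simpa using hf.add hg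
    refine squeeze_zero (fun n => norm_nonneg _) (fun n => ?_) hsum
    have : ((f + g : ↥(lipClosure X S)) : lp (fun n => X n) ⊤) n =
        (f : lp (fun n => X n) ⊤) n + (g : lp (fun n => X n) ⊤) n := by
      simp [lp.coeFn_add]
    rw [this]; exact norm_add_le _ _
  smul_mem' := by
    intro c f hf
    have : Tendsto (fun n => ‖c‖ * ‖(f : lp (fun n => X n) ⊤) n‖) (U : Filter ℕ)
        (nhds 0) := by simpa using hf.const_mul ‖c‖
    refine squeeze_zero (fun n => norm_nonneg _) (fun n => ?_) this
    have h1 : ((c • f : ↥(lipClosure X S)) : lp (fun n => X n) ⊤) n =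
        c • ((f : lp (fun n => X n) ⊤) n) := by
      simp [lp.coeFn_smul]
    rw [h1, norm_smul]

/-- The Lip-ultraproduct `ℓ∞_L(X_n, U)`: the quotient of `ℓ∞_L(X_n)` by the null
subspace, i.e. the image of `ℓ∞_L(X_n)` in the ultraproduct `ℓ∞(X_n, U)`. -/
noncomputable abbrev LipUltraproduct := ↥(lipClosure X S) ⧸ (nullU X S U)

/-- The quotient Lip-norm on the Lip-ultraproduct:
`‖q‖_{L,U} = inf { sup_n ‖f_n‖_L : f a representative of q }`. -/
noncomputable def lipQ (q : LipUltraproduct X S U) : ℝ≥0∞ :=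
  ⨅ f : {f : ↥(lipClosure X S) // Submodule.Quotient.mk f = q},
    ⨆ n, (S n).lipNorm ((f.1 : lp (fun n => X n) ⊤) n)


/-! ### Auxiliary machinery -/

section Aux
set_option linter.unusedSectionVars false
set_option maxHeartbeats 1000000
set_option synthInstance.maxHeartbeats 400000

local notation "Linf" => lp (fun n => X n) ⊤

lemma ofReal_norm_eq_coe_nnnorm {E : Type*} [SeminormedAddCommGroup E] (x : E) :
    ENNReal.ofReal ‖x‖ = (‖x‖₊ : ℝ≥0∞) := ENNReal.ofReal_eq_coe_nnreal _

lemma coe_add' (f g : ↥(lipClosure X S)) (n : ℕ) :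
    ((f + g : ↥(lipClosure X S)) : Linf) n = (f : Linf) n + (g : Linf) n := by
  simp [lp.coeFn_add]

lemma coe_smul' (c : ℝ) (f : ↥(lipClosure X S)) (n : ℕ) :
    ((c • f : ↥(lipClosure X S)) : Linf) n = c • ((f : Linf) n) := by
  simp [lp.coeFn_smul]

lemma coe_sub' (f g : ↥(lipClosure X S)) (n : ℕ) :
    ((f - g : ↥(lipClosure X S)) : Linf) n = (f : Linf) n - (g : Linf) n := by
  simp [lp.coeFn_sub]

instance : CompleteSpace ↥(lipClosure X S) :=
  IsClosed.completeSpace_coe (hs := Submodule.isClosed_topologicalClosure _)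

instance : CompleteSpace (LipUltraproduct X S U) := Submodule.Quotient.completeSpace _

instance repNonempty (q : LipUltraproduct X S U) :
    Nonempty {f : ↥(lipClosure X S) // Submodule.Quotient.mk f = q} := by
  obtain ⟨f, hf⟩ := Submodule.Quotient.mk_surjective (nullU X S U) q
  exact ⟨⟨f, hf⟩⟩

lemma lipQ_mk_le (f : ↥(lipClosure X S)) :
    lipQ X S U (Submodule.Quotient.mk f) ≤ ⨆ n, (S n).lipNorm ((f : Linf) n) :=
  iInf_le _ (⟨f, rfl⟩ : {g : ↥(lipClosure X S) //
    Submodule.Quotient.mk g = (Submodule.Quotient.mk f : LipUltraproduct X S U)})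

lemma exists_rep_lt (q : LipUltraproduct X S U) {c : ℝ≥0∞} (h : lipQ X S U q < c) :
    ∃ f : ↥(lipClosure X S), Submodule.Quotient.mk f = q ∧
      (⨆ n, (S n).lipNorm ((f : Linf) n)) < c := by
  rw [lipQ, iInf_lt_iff] at h
  obtain ⟨f, hf⟩ := h
  exact ⟨f.1, f.2, hf⟩

lemma lipQ_zero : lipQ X S U 0 = 0 := by
  refine le_antisymm ?_ (zero_le)
  have h := lipQ_mk_le X S U 0
  simp only [Submodule.Quotient.mk_zero] at h
  refine h.trans (iSup_le fun n => ?_)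
  have h0 : ((0 : ↥(lipClosure X S)) : Linf) n = 0 := by simp
  rw [h0, (S n).lipNorm_zero]

lemma lipQ_add_le (q q' : LipUltraproduct X S U) :
    lipQ X S U (q + q') ≤ lipQ X S U q + lipQ X S U q' := by
  have key : ∀ (f : {f : ↥(lipClosure X S) // Submodule.Quotient.mk f = q})
      (g : {g : ↥(lipClosure X S) // Submodule.Quotient.mk g = q'}),
      lipQ X S U (q + q') ≤ (⨆ n, (S n).lipNorm ((f.1 : Linf) n)) +
        ⨆ n, (S n).lipNorm ((g.1 : Linf) n) := by
    intro f g
    have hrep : (Submodule.Quotient.mk (f.1 + g.1) : LipUltraproduct X S U) = q + q' := by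
      rw [Submodule.Quotient.mk_add, f.2, g.2]
    rw [← hrep]
    refine (lipQ_mk_le X S U _).trans (iSup_le fun n => ?_)
    rw [coe_add' X S f.1 g.1 n]
    exact le_trans ((S n).lipNorm_add_le _ _)
      (add_le_add (le_iSup (fun n => (S n).lipNorm ((f.1 : Linf) n)) n)
        (le_iSup (fun n => (S n).lipNorm ((g.1 : Linf) n)) n))
  have heq : lipQ X S U q + lipQ X S U q' =
      ⨅ f : {f : ↥(lipClosure X S) // Submodule.Quotient.mk f = q},
        ⨅ g : {g : ↥(lipClosure X S) // Submodule.Quotient.mk g = q'},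
          ((⨆ n, (S n).lipNorm ((f.1 : Linf) n)) + ⨆ n, (S n).lipNorm ((g.1 : Linf) n)) := by
    rw [lipQ, lipQ, ENNReal.iInf_add]
    exact iInf_congr fun f => ENNReal.add_iInf
  rw [heq]
  exact le_iInf fun f => le_iInf fun g => key f g

lemma lipQ_smul_le {c : ℝ} (hc : c ≠ 0) (q : LipUltraproduct X S U) :
    lipQ X S U (c • q) ≤ (‖c‖₊ : ℝ≥0∞) * lipQ X S U q := by
  have h1 : lipQ X S U (c • q) ≤
      ⨅ f : {f : ↥(lipClosure X S) // Submodule.Quotient.mk f = q},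
        (‖c‖₊ : ℝ≥0∞) * ⨆ n, (S n).lipNorm ((f.1 : Linf) n) := by
    refine le_iInf fun f => ?_
    have hrep : (Submodule.Quotient.mk (c • f.1) : LipUltraproduct X S U) = c • q := by
      rw [Submodule.Quotient.mk_smul, f.2]
    rw [← hrep]
    refine (lipQ_mk_le X S U _).trans ?_
    rw [ENNReal.mul_iSup]
    exact iSup_mono fun n => le_of_eq (by rw [coe_smul' X S c f.1 n, (S n).lipNorm_smul])
  refine h1.trans (le_of_eq ?_)
  rw [lipQ]
  exact (ENNReal.mul_iInf_of_ne (by simpa using hc) ENNReal.coe_ne_top).symm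

lemma lipQ_smul (c : ℝ) (q : LipUltraproduct X S U) :
    lipQ X S U (c • q) = (‖c‖₊ : ℝ≥0∞) * lipQ X S U q := by
  rcases eq_or_ne c 0 with rfl | hc
  · rw [zero_smul]
    simp [lipQ_zero X S U]
  · refine le_antisymm (lipQ_smul_le X S U hc q) ?_
    have h2 := lipQ_smul_le X S U (inv_ne_zero hc) (c • q)
    rw [inv_smul_smul₀ hc] at h2
    calc (‖c‖₊ : ℝ≥0∞) * lipQ X S U q
        ≤ (‖c‖₊ : ℝ≥0∞) * ((‖c⁻¹‖₊ : ℝ≥0∞) * lipQ X S U (c • q)) :=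
          mul_le_mul_right h2 _
      _ = lipQ X S U (c • q) := by
          rw [← mul_assoc, ← ENNReal.coe_mul, ← nnnorm_mul, mul_inv_cancel₀ hc]
          simp

open Classical in
/-- Truncation of a bounded sequence outside a set `A`. -/
noncomputable def trunc (A : Set ℕ) (f : Linf) : Linf :=
  ⟨fun n => if n ∈ A then f n else 0, by
    apply memℓp_infty
    refine ⟨‖f‖, ?_⟩
    rintro r ⟨n, rfl⟩
    dsimp only
    split
    · exact lp.norm_apply_le_norm ENNReal.top_ne_zero f n
    · rw [norm_zero]; exact norm_nonneg f⟩

open Classical in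
lemma trunc_apply (A : Set ℕ) (f : Linf) (n : ℕ) :
    trunc X A f n = if n ∈ A then f n else 0 := rfl

lemma norm_trunc_le (A : Set ℕ) (f : Linf) : ‖trunc X A f‖ ≤ ‖f‖ := by
  rw [lp.norm_eq_ciSup]
  refine ciSup_le fun n => ?_
  rw [trunc_apply]
  split
  · exact lp.norm_apply_le_norm ENNReal.top_ne_zero f n
  · rw [norm_zero]; exact norm_nonneg f

lemma trunc_sub (A : Set ℕ) (f g : Linf) :
    trunc X A f - trunc X A g = trunc X A (f - g) := by
  ext n
  rw [lp.coeFn_sub, Pi.sub_apply, trunc_apply, trunc_apply, trunc_apply,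
    lp.coeFn_sub, Pi.sub_apply]
  split
  · rfl
  · rw [sub_zero]

lemma lipschitz_trunc (A : Set ℕ) : LipschitzWith 1 (trunc X A) := by
  refine LipschitzWith.of_dist_le_mul fun f g => ?_
  rw [NNReal.coe_one, one_mul, dist_eq_norm, dist_eq_norm, trunc_sub]
  exact norm_trunc_le X A _

lemma trunc_mem_finLip (A : Set ℕ) {f : Linf} (hf : f ∈ finLip X S) :
    trunc X A f ∈ finLip X S := by
  obtain ⟨C, hC⟩ := hf
  refine ⟨C, fun n => ?_⟩
  rw [trunc_apply]
  split
  · exact hC n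
  · rw [(S n).lipNorm_zero]; exact zero_le

lemma trunc_mem_lipClosure (A : Set ℕ) {f : Linf} (hf : f ∈ lipClosure X S) :
    trunc X A f ∈ lipClosure X S := by
  have hset : (lipClosure X S : Set Linf) = closure ((finLip X S : Set Linf)) :=
    Submodule.topologicalClosure_coe _
  have hf' : f ∈ closure ((finLip X S : Set Linf)) := by
    rw [← hset]; exact hf
  have : trunc X A f ∈ closure ((finLip X S : Set Linf)) :=
    map_mem_closure (lipschitz_trunc X A).continuous hf'
      (fun y hy => trunc_mem_finLip X S A hy)
  rw [← hset] at this
  exact this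

/-- Truncation as an operation on `ℓ∞_L`. -/
noncomputable def truncC (A : Set ℕ) (f : ↥(lipClosure X S)) : ↥(lipClosure X S) :=
  ⟨trunc X A f.1, trunc_mem_lipClosure X S A f.2⟩

lemma truncC_coe (A : Set ℕ) (f : ↥(lipClosure X S)) (n : ℕ) :
    ((truncC X S A f : ↥(lipClosure X S)) : Linf) n = trunc X A f.1 n := rfl

lemma mem_nullU_iff (f : ↥(lipClosure X S)) :
    f ∈ nullU X S U ↔ Tendsto (fun n => ‖(f : Linf) n‖) (U : Filter ℕ) (nhds 0) :=
  Iff.rfl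

lemma mk_truncC {A : Set ℕ} (hA : A ∈ U) (f : ↥(lipClosure X S)) :
    (Submodule.Quotient.mk (truncC X S A f) : LipUltraproduct X S U) =
      Submodule.Quotient.mk f := by
  rw [Submodule.Quotient.eq, mem_nullU_iff]
  have hzero : ∀ n ∈ A, ‖((truncC X S A f - f : ↥(lipClosure X S)) : Linf) n‖ = 0 := by
    intro n hn
    rw [coe_sub' X S _ f n, truncC_coe, trunc_apply, if_pos hn, sub_self, norm_zero]
  refine Tendsto.congr' ?_ (tendsto_const_nhds : Tendsto (fun _ => (0:ℝ)) _ _)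
  exact Filter.eventually_of_mem hA fun n hn => (hzero n hn).symm

lemma tendsto_norm_mk (f : ↥(lipClosure X S)) :
    Tendsto (fun n => ‖(f : Linf) n‖) (U : Filter ℕ)
      (nhds ‖(Submodule.Quotient.mk f : LipUltraproduct X S U)‖) := by
  set g := fun n => ‖(f : Linf) n‖ with hg
  have hmem : ∀ n, g n ∈ Set.Icc (0:ℝ) ‖(f : Linf)‖ :=
    fun n => ⟨norm_nonneg _, lp.norm_apply_le_norm ENNReal.top_ne_zero _ n⟩
  obtain ⟨l, -, hl⟩ := (isCompact_Icc (a := (0:ℝ)) (b := ‖(f : Linf)‖)).ultrafilter_le_nhds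
    (U.map g) (by
      rw [Ultrafilter.coe_map, Filter.le_principal_iff, Filter.mem_map]
      exact Filter.univ_mem' fun n => hmem n)
  rw [Ultrafilter.coe_map] at hl
  have htends : Tendsto g (U : Filter ℕ) (nhds l) := hl
  have hl0 : 0 ≤ l := ge_of_tendsto htends (Filter.Eventually.of_forall fun n => (hmem n).1)
  suffices h : ‖(Submodule.Quotient.mk f : LipUltraproduct X S U)‖ = l by rw [h]; exact htends
  refine le_antisymm (le_of_forall_pos_le_add fun ε hε => ?_)
    (le_of_forall_pos_le_add fun ε hε => ?_)
  · -- ‖mk f‖ ≤ l + ε  via truncation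
    set A : Set ℕ := {n | g n < l + ε} with hA
    have hAU : A ∈ U := htends (Iio_mem_nhds (by linarith))
    calc ‖(Submodule.Quotient.mk f : LipUltraproduct X S U)‖
        = ‖(Submodule.Quotient.mk (truncC X S A f) : LipUltraproduct X S U)‖ := by
          rw [mk_truncC X S U hAU]
      _ ≤ ‖truncC X S A f‖ := Submodule.Quotient.norm_mk_le _ _
      _ ≤ l + ε := by
          show ‖trunc X A (f : Linf)‖ ≤ l + ε
          rw [lp.norm_eq_ciSup]
          refine ciSup_le fun n => ?_
          rw [trunc_apply]
          split
          · next hn => exact le_of_lt hn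
          · rw [norm_zero]; positivity
  · -- l ≤ ‖mk f‖ + ε
    obtain ⟨m, hm_eq, hm_norm⟩ :=
      Submodule.Quotient.norm_mk_lt (Submodule.Quotient.mk f : LipUltraproduct X S U) hε
    have hnull : f - m ∈ nullU X S U := (Submodule.Quotient.eq _).1 hm_eq.symm
    rw [mem_nullU_iff] at hnull
    have hb : ∀ n, g n ≤ ‖m‖ + ‖((f - m : ↥(lipClosure X S)) : Linf) n‖ := by
      intro n
      have h1 : g n ≤ ‖(m : Linf) n‖ + ‖(f : Linf) n - (m : Linf) n‖ := by
        rw [hg]; exact norm_le_insert' _ _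
      have h2 : ‖(m : Linf) n‖ ≤ ‖m‖ :=
        lp.norm_apply_le_norm ENNReal.top_ne_zero (m : Linf) n
      rw [coe_sub' X S f m n]
      exact h1.trans (add_le_add_left h2 _)
    have hlim : Tendsto (fun n => ‖m‖ + ‖((f - m : ↥(lipClosure X S)) : Linf) n‖)
        (U : Filter ℕ) (nhds (‖m‖ + 0)) := tendsto_const_nhds.add hnull
    have := le_of_tendsto_of_tendsto' htends hlim hb
    rw [add_zero] at this
    exact this.trans hm_norm.le

lemma eq_zero_of_norm_zero (q : LipUltraproduct X S U) (hq : ‖q‖ = 0) : q = 0 := by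
  obtain ⟨f, rfl⟩ := Submodule.Quotient.mk_surjective _ q
  have h := tendsto_norm_mk X S U f
  rw [hq] at h
  exact (Submodule.Quotient.mk_eq_zero _).2 ((mem_nullU_iff X S U f).2 h)

lemma norm_le_of_cover {Y : Type*} [NormedAddCommGroup Y] [NormedSpace ℝ Y] [CompleteSpace Y]
    (T : LipSpace Y) {m : ℕ} {t : Finset Y} (hcard : t.card ≤ m)
    (hcov : {x : Y | T.lipNorm x ≤ 1} ⊆ ⋃ c ∈ t, Metric.closedBall c 1)
    {x : Y} (hx : T.lipNorm x ≤ 1) : ‖x‖ ≤ 3 * m + 3 := by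
  by_contra hbig
  push_neg at hbig
  have hxpos : (0:ℝ) < ‖x‖ := lt_trans (by positivity) hbig
  set p : Fin (m+1) → Y := fun j => ((3 * ((j : ℕ) : ℝ)) / ‖x‖) • x with hp
  have hlip : ∀ j, T.lipNorm (p j) ≤ 1 := by
    intro j
    rw [hp]
    dsimp only
    rw [T.lipNorm_smul]
    have hjm : ((j : ℕ) : ℝ) ≤ m := by exact_mod_cast Nat.lt_succ_iff.1 j.isLt
    have hcr : ‖(3 * ((j : ℕ) : ℝ)) / ‖x‖‖ ≤ 1 := by
      rw [Real.norm_eq_abs, abs_div, abs_of_nonneg (by positivity), abs_of_pos hxpos,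
        div_le_one hxpos]
      nlinarith
    have hc1 : (‖(3 * ((j : ℕ) : ℝ)) / ‖x‖‖₊ : ℝ≥0∞) ≤ 1 := by
      rw [← ofReal_norm_eq_coe_nnnorm]
      calc ENNReal.ofReal ‖(3 * ((j : ℕ) : ℝ)) / ‖x‖‖ ≤ ENNReal.ofReal 1 :=
        ENNReal.ofReal_le_ofReal hcr
        _ = 1 := ENNReal.ofReal_one
    exact mul_le_one' hc1 hx
  have hc : ∀ j, ∃ c ∈ t, p j ∈ Metric.closedBall c 1 := by
    intro j
    have := hcov (hlip j)
    simpa using this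
  choose c hct hcball using hc
  obtain ⟨j, -, j', -, hne, hcc⟩ :=
    Finset.exists_ne_map_eq_of_card_lt_of_maps_to
      (show t.card < (Finset.univ : Finset (Fin (m+1))).card by
        simpa using Nat.lt_succ_of_le hcard) (fun j _ => hct j)
  have hdist2 : dist (p j) (p j') ≤ 2 := by
    have h1 : dist (p j) (c j) ≤ 1 := Metric.mem_closedBall.1 (hcball j)
    have h2 : dist (p j') (c j) ≤ 1 := by rw [hcc]; exact Metric.mem_closedBall.1 (hcball j')
    calc dist (p j) (p j') ≤ dist (p j) (c j) + dist (c j) (p j') := dist_triangle _ _ _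
      _ ≤ 1 + 1 := add_le_add h1 (by rwa [dist_comm])
      _ = 2 := by norm_num
  have hsep : (3:ℝ) ≤ dist (p j) (p j') := by
    have hval : (j : ℕ) ≠ (j' : ℕ) := fun h => hne (Fin.ext h)
    have habs : (1:ℝ) ≤ |((j : ℕ) : ℝ) - ((j' : ℕ) : ℝ)| := by
      have hz : ((j : ℕ) : ℤ) - ((j' : ℕ) : ℤ) ≠ 0 :=
        sub_ne_zero.2 (by exact_mod_cast hval)
      have h2 : (1:ℤ) ≤ |((j : ℕ) : ℤ) - ((j' : ℕ) : ℤ)| := Int.one_le_abs hz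
      have : ((1:ℤ):ℝ) ≤ ((|((j : ℕ) : ℤ) - ((j' : ℕ) : ℤ)| : ℤ) : ℝ) := Int.cast_le.2 h2
      push_cast at this
      convert this using 2 <;> push_cast <;> ring
    rw [dist_eq_norm, hp]
    dsimp only
    rw [← sub_smul, norm_smul, div_sub_div_same, Real.norm_eq_abs, abs_div,
      abs_of_pos hxpos, div_mul_cancel₀ _ (ne_of_gt hxpos)]
    have : 3 * ((j : ℕ) : ℝ) - 3 * ((j' : ℕ) : ℝ) = 3 * (((j : ℕ) : ℝ) - ((j' : ℕ) : ℝ)) := by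
      ring
    rw [this, abs_mul, abs_of_pos (by norm_num : (0:ℝ) < 3)]
    nlinarith
  linarith

lemma nnnorm_le_radius {Y : Type*} [NormedAddCommGroup Y] [NormedSpace ℝ Y] [CompleteSpace Y]
    (T : LipSpace Y) {R : ℝ} (hR0 : 0 < R) (hR : ∀ x : Y, T.lipNorm x ≤ 1 → ‖x‖ ≤ R)
    (x : Y) : (‖x‖₊ : ℝ≥0∞) ≤ ENNReal.ofReal R * T.lipNorm x := by
  rcases eq_or_ne (T.lipNorm x) 0 with h0 | h0
  · rw [T.lipNorm_eq_zero x h0]; simp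
  rcases eq_or_ne (T.lipNorm x) ⊤ with htop | htop
  · rw [htop, ENNReal.mul_top ((ENNReal.ofReal_pos.2 hR0).ne')]
    exact le_top
  set L := T.lipNorm x with hL
  have hLpos : 0 < L.toReal := ENNReal.toReal_pos h0 htop
  have hy : T.lipNorm ((L.toReal)⁻¹ • x) ≤ 1 := by
    rw [T.lipNorm_smul, ← ofReal_norm_eq_coe_nnnorm,
      Real.norm_of_nonneg (by positivity), ENNReal.ofReal_inv_of_pos hLpos,
      ENNReal.ofReal_toReal htop, ← hL, ENNReal.inv_mul_cancel h0 htop]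
  have hny := hR _ hy
  rw [norm_smul, Real.norm_of_nonneg (by positivity : (0:ℝ) ≤ (L.toReal)⁻¹)] at hny
  have hxr : ‖x‖ ≤ R * L.toReal := by
    have h3 := mul_le_mul_of_nonneg_left hny hLpos.le
    rw [← mul_assoc, mul_inv_cancel₀ hLpos.ne', one_mul] at h3
    calc ‖x‖ ≤ L.toReal * R := h3
      _ = R * L.toReal := mul_comm _ _
  calc (‖x‖₊ : ℝ≥0∞) = ENNReal.ofReal ‖x‖ := (ofReal_norm_eq_coe_nnnorm x).symm
    _ ≤ ENNReal.ofReal (R * L.toReal) := ENNReal.ofReal_le_ofReal hxr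
    _ = ENNReal.ofReal R * ENNReal.ofReal L.toReal := ENNReal.ofReal_mul hR0.le
    _ = ENNReal.ofReal R * L := by rw [ENNReal.ofReal_toReal htop]

lemma exists_radius (hunif : ∀ ε : ℝ, 0 < ε → ∃ m : ℕ, ∀ n, ∃ t : Finset (X n),
      t.card ≤ m ∧ {x : X n | (S n).lipNorm x ≤ 1} ⊆ ⋃ c ∈ t, Metric.closedBall c ε) :
    ∃ R : ℝ, 0 < R ∧ ∀ (n : ℕ) (x : X n), (S n).lipNorm x ≤ 1 → ‖x‖ ≤ R := by
  obtain ⟨m, hm⟩ := hunif 1 one_pos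
  refine ⟨3 * m + 3, by positivity, fun n x hx => ?_⟩
  obtain ⟨t, hc, hcov⟩ := hm n
  exact norm_le_of_cover (S n) hc hcov hx

lemma exists_net (hunif : ∀ ε : ℝ, 0 < ε → ∃ m : ℕ, ∀ n, ∃ t : Finset (X n),
      t.card ≤ m ∧ {x : X n | (S n).lipNorm x ≤ 1} ⊆ ⋃ c ∈ t, Metric.closedBall c ε)
    {ε : ℝ} (hε : 0 < ε) :
    ∃ m : ℕ, ∀ n, ∃ c : Fin (m+1) → X n,
      (∀ j, (S n).lipNorm (c j) ≤ 1) ∧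
      ∀ x : X n, (S n).lipNorm x ≤ 1 → ∃ j, ‖x - c j‖ ≤ 2 * ε := by
  classical
  obtain ⟨m, hm⟩ := hunif ε hε
  refine ⟨m, fun n => ?_⟩
  obtain ⟨t, hcard, hcov⟩ := hm n
  have hw : ∀ y : X n, ∃ z : X n, (S n).lipNorm z ≤ 1 ∧
      ((∃ x, (S n).lipNorm x ≤ 1 ∧ x ∈ Metric.closedBall y ε) →
        z ∈ Metric.closedBall y ε) := by
    intro y
    by_cases h : ∃ x, (S n).lipNorm x ≤ 1 ∧ x ∈ Metric.closedBall y ε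
    · obtain ⟨x, hx1, hx2⟩ := h
      exact ⟨x, hx1, fun _ => hx2⟩
    · refine ⟨0, by rw [(S n).lipNorm_zero]; exact zero_le, fun hex => absurd hex h⟩
  choose w hw1 hw2 using hw
  set l := t.toList with hl
  refine ⟨fun j => if h : (j : ℕ) < l.length then w (l.get ⟨j, h⟩) else 0, fun j => ?_, ?_⟩
  · dsimp only
    split
    · exact hw1 _
    · rw [(S n).lipNorm_zero]; exact zero_le
  · intro x hx
    have hxU := hcov hx
    simp only [Set.mem_iUnion, exists_prop] at hxU
    obtain ⟨y, hyt, hxy⟩ := hxU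
    obtain ⟨i, hi⟩ := List.mem_iff_get.1 (Finset.mem_toList.2 hyt)
    have hilen : (i : ℕ) < l.length := i.isLt
    have hlm : l.length ≤ m := by rw [hl, Finset.length_toList]; exact hcard
    have him : (i : ℕ) < m + 1 := Nat.lt_succ_of_lt (lt_of_lt_of_le hilen hlm)
    refine ⟨⟨(i : ℕ), him⟩, ?_⟩
    have hlt : ((⟨(i : ℕ), him⟩ : Fin (m+1)) : ℕ) < l.length := hilen
    dsimp only
    rw [dif_pos hlt]
    have hgety : l.get ⟨(i : ℕ), hlt⟩ = y := by simpa using hi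
    rw [hgety]
    have hz := hw2 y ⟨x, hx, hxy⟩
    have d1 : dist x y ≤ ε := Metric.mem_closedBall.1 hxy
    have d2 : dist (w y) y ≤ ε := Metric.mem_closedBall.1 hz
    calc ‖x - w y‖ = dist x (w y) := (dist_eq_norm _ _).symm
      _ ≤ dist x y + dist y (w y) := dist_triangle _ _ _
      _ ≤ ε + ε := add_le_add d1 (by rwa [dist_comm])
      _ = 2 * ε := by ring

/-- Build an element of `ℓ∞_L` from a pointwise-Lip-bounded sequence. -/
noncomputable def ofSeq (c : ∀ n, X n) {R : ℝ} (hb : ∀ n, ‖c n‖ ≤ R)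
    (hlip : ∀ n, (S n).lipNorm (c n) ≤ 1) : ↥(lipClosure X S) :=
  ⟨⟨c, memℓp_infty ⟨R, by rintro r ⟨n, rfl⟩; exact hb n⟩⟩,
    Submodule.le_topologicalClosure _ ⟨1, fun n => hlip n⟩⟩

lemma ofSeq_apply (c : ∀ n, X n) {R : ℝ} (hb : ∀ n, ‖c n‖ ≤ R)
    (hlip : ∀ n, (S n).lipNorm (c n) ≤ 1) (n : ℕ) :
    ((ofSeq X S c hb hlip : ↥(lipClosure X S)) : Linf) n = c n := rfl

lemma isCompact_lipBall
    (hunif : ∀ ε : ℝ, 0 < ε → ∃ m : ℕ, ∀ n, ∃ t : Finset (X n),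
      t.card ≤ m ∧ {x : X n | (S n).lipNorm x ≤ 1} ⊆ ⋃ c ∈ t, Metric.closedBall c ε)
    (hU : (U : Filter ℕ) ≤ Filter.cofinite) :
    IsCompact {q : LipUltraproduct X S U | lipQ X S U q ≤ 1} := by
  classical
  obtain ⟨R, hR0, hR⟩ := exists_radius X S hunif
  set D : Set (LipUltraproduct X S U) :=
    (fun f => Submodule.Quotient.mk f) ''
      {f : ↥(lipClosure X S) | ∀ n, (S n).lipNorm ((f : Linf) n) ≤ 1} with hD
  have hDsub : D ⊆ {q | lipQ X S U q ≤ 1} := by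
    rintro q ⟨f, hf, rfl⟩
    exact le_trans (lipQ_mk_le X S U f) (iSup_le hf)
  -- totally bounded
  have hDtb : TotallyBounded D := by
    refine Metric.totallyBounded_iff.2 ?_
    intro ε hε
    obtain ⟨m, hmnet⟩ := exists_net X S hunif (show (0:ℝ) < ε/6 by linarith)
    choose c hclip hcnet using hmnet
    have hcb : ∀ (j : Fin (m+1)) (n : ℕ), ‖c n j‖ ≤ R := fun j n => hR n _ (hclip n j)
    set P : Fin (m+1) → LipUltraproduct X S U := fun j =>
      Submodule.Quotient.mk (ofSeq X S (fun n => c n j) (hcb j) (fun n => hclip n j)) with hP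
    refine ⟨Set.range P, Set.finite_range P, ?_⟩
    rintro q ⟨f, hf, rfl⟩
    have hsel : ∀ n, ∃ j, ‖(f : Linf) n - c n j‖ ≤ 2 * (ε/6) := fun n => hcnet n _ (hf n)
    choose j hj using hsel
    have hjU : ∃ j₀, {n | j n = j₀} ∈ U := by
      by_contra hno
      push_neg at hno
      have h1 : ∀ j₀ : Fin (m+1), {n | j n = j₀}ᶜ ∈ U := fun j₀ =>
        (Ultrafilter.compl_mem_iff_notMem).2 (hno j₀)
      have h2 : (⋂ j₀ : Fin (m+1), {n | j n = j₀}ᶜ) ∈ U := Filter.iInter_mem.2 h1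
      have h3 : (⋂ j₀ : Fin (m+1), {n | j n = j₀}ᶜ) = (∅ : Set ℕ) := by
        ext n; simp
      rw [h3] at h2
      exact Filter.empty_notMem _ h2
    obtain ⟨j₀, hj₀⟩ := hjU
    refine Set.mem_iUnion₂.2 ⟨P j₀, Set.mem_range_self _, ?_⟩
    set F0 := ofSeq X S (fun n => c n j₀) (hcb j₀) (fun n => hclip n j₀) with hF0
    have hmk : (Submodule.Quotient.mk f : LipUltraproduct X S U) - P j₀ =
        Submodule.Quotient.mk (f - F0) := by
      rw [Submodule.Quotient.mk_sub]
    have htd := tendsto_norm_mk X S U (f - F0)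
    have hev : ∀ᶠ n in (U : Filter ℕ),
        ‖((f - F0 : ↥(lipClosure X S)) : Linf) n‖ ≤ 2 * (ε/6) := by
      refine Filter.eventually_of_mem hj₀ fun n hn => ?_
      rw [coe_sub' X S f F0 n, hF0, ofSeq_apply]
      have hthis := hj n
      rw [show j n = j₀ from hn] at hthis
      exact hthis
    have hle : ‖(Submodule.Quotient.mk (f - F0) : LipUltraproduct X S U)‖ ≤ 2 * (ε/6) :=
      le_of_tendsto htd hev
    rw [Metric.mem_ball, dist_eq_norm, hmk]
    calc ‖(Submodule.Quotient.mk (f - F0) : LipUltraproduct X S U)‖ ≤ 2 * (ε/6) := hle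
      _ < ε := by linarith
  -- closed
  have hDclosed : IsClosed D := by
    refine IsSeqClosed.isClosed ?_
    intro Q q hQ hq
    choose F hFK hFmk using hQ
    have hsel : ∀ k : ℕ, ∃ N, dist (Q N) q < (1/2 : ℝ)^k := by
      intro k
      obtain ⟨N, hN⟩ := (Metric.tendsto_atTop.1 hq) ((1/2 : ℝ)^k) (by positivity)
      exact ⟨N, hN N le_rfl⟩
    choose ψ hψ using hsel
    set G : ℕ → ↥(lipClosure X S) := fun k => F (ψ k) with hG
    have hGlip : ∀ k n, (S n).lipNorm ((G k : Linf) n) ≤ 1 := fun k => hFK (ψ k)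
    have hGq : ∀ k, dist (Submodule.Quotient.mk (G k) : LipUltraproduct X S U) q
        < (1/2 : ℝ)^k := by
      intro k
      have h := hψ k
      rw [← hFmk (ψ k)] at h
      exact h
    set A : ℕ → Set ℕ := fun k =>
      {n | ‖((G (k+1) - G k : ↥(lipClosure X S)) : Linf) n‖ < 4 * (1/2 : ℝ)^k} with hA
    have hAU : ∀ k, A k ∈ U := by
      intro k
      have htd := tendsto_norm_mk X S U (G (k+1) - G k)
      have hlt : ‖(Submodule.Quotient.mk (G (k+1) - G k) : LipUltraproduct X S U)‖
          < 4 * (1/2 : ℝ)^k := by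
        rw [Submodule.Quotient.mk_sub]
        have h1 := hGq (k+1)
        have h2 := hGq k
        have hpow : (1/2 : ℝ)^(k+1) ≤ (1/2 : ℝ)^k := by
          rw [pow_succ]
          nlinarith [pow_pos (by norm_num : (0:ℝ) < 1/2) k]
        calc ‖(Submodule.Quotient.mk (G (k+1)) : LipUltraproduct X S U)
              - Submodule.Quotient.mk (G k)‖
            ≤ dist (Submodule.Quotient.mk (G (k+1)) : LipUltraproduct X S U) q
              + dist (Submodule.Quotient.mk (G k) : LipUltraproduct X S U) q := by
              erw [← dist_eq_norm]
              exact dist_triangle_right _ _ _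
          _ < (1/2 : ℝ)^(k+1) + (1/2 : ℝ)^k := add_lt_add h1 h2
          _ ≤ 4 * (1/2 : ℝ)^k := by nlinarith [pow_pos (by norm_num : (0:ℝ) < 1/2) k]
      exact htd (Iio_mem_nhds hlt)
    set B : ℕ → Set ℕ := fun k => ⋂ i ∈ Finset.range k, A i with hB
    have hBU : ∀ k, B k ∈ U := fun k => (Filter.biInter_finset_mem _).2 fun i _ => hAU i
    have hB0 : ∀ n, n ∈ B 0 := by intro n; simp [hB]
    have hBmono : ∀ {k k' : ℕ}, k ≤ k' → B k' ⊆ B k := by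
      intro k k' hkk'
      rw [hB]
      exact Set.biInter_subset_biInter_left fun i hi =>
        Finset.mem_range.2 (lt_of_lt_of_le (Finset.mem_range.1 hi) hkk')
    have hmemA : ∀ {k i : ℕ} {n : ℕ}, n ∈ B k → i < k → n ∈ A i := by
      intro k i n hn hik
      have := Set.mem_iInter₂.1 hn i (Finset.mem_range.2 hik)
      exact this
    set φ : ℕ → ℕ := fun n => Nat.findGreatest (fun k => n ∈ B k) n with hφ
    have hφB : ∀ n, n ∈ B (φ n) :=
      fun n => Nat.findGreatest_spec (P := fun k => n ∈ B k) (m := 0) (Nat.zero_le n) (hB0 n)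
    have hφge : ∀ k n, k ≤ n → n ∈ B k → k ≤ φ n :=
      fun k n hkn hnB => Nat.le_findGreatest hkn hnB
    set g : ∀ n, X n := fun n => (G (φ n) : Linf) n with hg
    have hglip : ∀ n, (S n).lipNorm (g n) ≤ 1 := fun n => hGlip (φ n) n
    have hgb : ∀ n, ‖g n‖ ≤ R := fun n => hR n _ (hglip n)
    set gg := ofSeq X S g hgb hglip with hgg
    have tele : ∀ k j, k ≤ j → ∀ n, n ∈ B j →
        ‖(G j : Linf) n - (G k : Linf) n‖ ≤ 8 * (1/2 : ℝ)^k - 8 * (1/2 : ℝ)^j := by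
      intro k
      refine Nat.le_induction ?_ ?_
      · intro n _
        simp
      · intro j hkj ih n hnB
        have hnA : n ∈ A j := hmemA hnB (Nat.lt_succ_self j)
        have hnBj : n ∈ B j := hBmono (Nat.le_succ j) hnB
        have h1 := ih n hnBj
        have h2 : ‖(G (j+1) : Linf) n - (G j : Linf) n‖ < 4 * (1/2 : ℝ)^j := by
          have h3 : n ∈ A j := hnA
          rw [hA] at h3
          simp only [Set.mem_setOf_eq] at h3
          rwa [coe_sub' X S (G (j+1)) (G j) n] at h3
        have htri : ‖(G (j+1) : Linf) n - (G k : Linf) n‖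
            ≤ ‖(G (j+1) : Linf) n - (G j : Linf) n‖ + ‖(G j : Linf) n - (G k : Linf) n‖ := by
          rw [← dist_eq_norm, ← dist_eq_norm, ← dist_eq_norm]
          exact dist_triangle _ _ _
        have hps : (1/2 : ℝ)^(j+1) = (1/2 : ℝ)^j * (1/2) := pow_succ _ _
        calc ‖(G (j+1) : Linf) n - (G k : Linf) n‖
            ≤ ‖(G (j+1) : Linf) n - (G j : Linf) n‖ + ‖(G j : Linf) n - (G k : Linf) n‖ := htri
          _ ≤ 4 * (1/2 : ℝ)^j + (8 * (1/2 : ℝ)^k - 8 * (1/2 : ℝ)^j) := add_le_add h2.le h1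
          _ = 8 * (1/2 : ℝ)^k - 8 * (1/2 : ℝ)^(j+1) := by rw [hps]; ring
    have hclose : ∀ k, ‖(Submodule.Quotient.mk gg : LipUltraproduct X S U)
        - Submodule.Quotient.mk (G k)‖ ≤ 8 * (1/2 : ℝ)^k := by
      intro k
      have htd := tendsto_norm_mk X S U (gg - G k)
      have hmem : {n | k ≤ n} ∩ B k ∈ U := by
        refine Filter.inter_mem (hU ?_) (hBU k)
        rw [Filter.mem_cofinite]
        have : {n : ℕ | k ≤ n}ᶜ = {n | n < k} := by ext n; simp [not_le]
        rw [this]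
        exact Set.finite_lt_nat k
      have hev : ∀ᶠ n in (U : Filter ℕ),
          ‖((gg - G k : ↥(lipClosure X S)) : Linf) n‖ ≤ 8 * (1/2 : ℝ)^k := by
        refine Filter.eventually_of_mem hmem ?_
        rintro n ⟨hkn, hnB⟩
        rw [coe_sub' X S gg (G k) n, hgg, ofSeq_apply]
        have hk' : k ≤ φ n := hφge k n hkn hnB
        have := tele k (φ n) hk' n (hφB n)
        have hpow : (0:ℝ) < (1/2 : ℝ)^(φ n) := by positivity
        rw [hg]
        dsimp only
        linarith
      rw [← Submodule.Quotient.mk_sub]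
      exact le_of_tendsto htd hev
    have hqeq : q = Submodule.Quotient.mk gg := by
      have hz : ∀ k : ℕ, ‖q - Submodule.Quotient.mk gg‖ ≤ 9 * (1/2 : ℝ)^k := by
        intro k
        have h1 := hGq k
        have h2 := hclose k
        calc ‖q - Submodule.Quotient.mk gg‖
            ≤ ‖q - Submodule.Quotient.mk (G k)‖
              + ‖Submodule.Quotient.mk (G k) - (Submodule.Quotient.mk gg :
                  LipUltraproduct X S U)‖ := by
              erw [← dist_eq_norm, ← dist_eq_norm, ← dist_eq_norm]
              exact dist_triangle _ _ _
          _ ≤ (1/2 : ℝ)^k + 8 * (1/2 : ℝ)^k := by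
              refine add_le_add ?_ ?_
              · erw [← dist_eq_norm, dist_comm]
                exact (hGq k).le
              · erw [norm_sub_rev]
                exact h2
          _ = 9 * (1/2 : ℝ)^k := by ring
      have h0 : ‖q - Submodule.Quotient.mk gg‖ = 0 := by
        by_contra hne
        have hpos : 0 < ‖q - Submodule.Quotient.mk gg‖ := (norm_nonneg _).lt_of_ne' hne
        obtain ⟨k, hk⟩ := exists_pow_lt_of_lt_one
          (show (0:ℝ) < ‖q - Submodule.Quotient.mk gg‖ / 9 by positivity)
          (by norm_num : (1:ℝ)/2 < 1)
        have := hz k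
        rw [lt_div_iff₀ (by norm_num : (0:ℝ) < 9)] at hk
        linarith
      have := eq_zero_of_norm_zero X S U (q - Submodule.Quotient.mk gg) h0
      exact sub_eq_zero.1 this
    refine ⟨gg, fun n => ?_, hqeq.symm⟩
    rw [hgg, ofSeq_apply]
    exact hglip n
  have hDcomp : IsCompact D := @TotallyBounded.isCompact_of_isClosed _ _
    (by exact (inferInstance : CompleteSpace (LipUltraproduct X S U))) _ hDtb hDclosed
  -- the lip ball equals D
  have hBD : {q | lipQ X S U q ≤ 1} ⊆ D := by
    intro q hq
    rw [← hDclosed.closure_eq, Metric.mem_closure_iff]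
    intro ε hε
    set δ : ℝ := min 1 (ε / (2 * R + 2)) with hδ
    have hδpos : 0 < δ := lt_min one_pos (div_pos hε (by linarith))
    have hδ1 : δ ≤ 1 := min_le_left _ _
    have hδ2 : δ ≤ ε / (2 * R + 2) := min_le_right _ _
    set a : ℝ := 1 + δ with ha
    have ha1 : (1:ℝ) ≤ a := by rw [ha]; linarith
    have hapos : (0:ℝ) < a := by linarith
    have haE : ((1 + δ.toNNReal : ℝ≥0) : ℝ≥0∞) = ENNReal.ofReal a := by
      rw [ENNReal.ofReal, ha, Real.toNNReal_add one_pos.le hδpos.le, Real.toNNReal_one]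
    have hlt : lipQ X S U q < ((1 + δ.toNNReal : ℝ≥0) : ℝ≥0∞) := by
      refine lt_of_le_of_lt hq ?_
      rw [show ((1:ℝ≥0∞)) = ((1 : ℝ≥0) : ℝ≥0∞) from rfl, ENNReal.coe_lt_coe]
      exact lt_add_of_pos_right _ (Real.toNNReal_pos.2 hδpos)
    obtain ⟨f, hfq, hflt⟩ := exists_rep_lt X S U q hlt
    have hofa0 : ENNReal.ofReal a ≠ 0 := (ENNReal.ofReal_pos.2 hapos).ne'
    have hscale : ∀ n, (S n).lipNorm (((a⁻¹ • f : ↥(lipClosure X S)) : Linf) n) ≤ 1 := by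
      intro n
      rw [coe_smul' X S a⁻¹ f n, (S n).lipNorm_smul]
      have hainv : (‖a⁻¹‖₊ : ℝ≥0∞) = (ENNReal.ofReal a)⁻¹ := by
        rw [← ofReal_norm_eq_coe_nnnorm, Real.norm_of_nonneg (by positivity),
          ENNReal.ofReal_inv_of_pos hapos]
      rw [hainv]
      have h9 : (S n).lipNorm ((f : Linf) n) ≤ ENNReal.ofReal a := by
        rw [← haE]
        exact le_trans (le_iSup (fun n => (S n).lipNorm ((f : Linf) n)) n) hflt.le
      calc (ENNReal.ofReal a)⁻¹ * (S n).lipNorm ((f : Linf) n)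
          ≤ (ENNReal.ofReal a)⁻¹ * ENNReal.ofReal a := mul_le_mul_right h9 _
        _ = 1 := ENNReal.inv_mul_cancel hofa0 ENNReal.ofReal_ne_top
    refine ⟨Submodule.Quotient.mk (a⁻¹ • f), ⟨a⁻¹ • f, fun n => hscale n, rfl⟩, ?_⟩
    have hsub : (Submodule.Quotient.mk f : LipUltraproduct X S U) -
        Submodule.Quotient.mk (a⁻¹ • f) = Submodule.Quotient.mk (f - a⁻¹ • f) := by
      rw [Submodule.Quotient.mk_sub]
    have hfn2R : ∀ n, ‖(f : Linf) n‖ ≤ 2 * R := by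
      intro n
      have h6 := nnnorm_le_radius (S n) hR0 (fun x hx => hR n x hx) ((f : Linf) n)
      have h7 : (S n).lipNorm ((f : Linf) n) ≤ ENNReal.ofReal 2 := by
        have h9 : (S n).lipNorm ((f : Linf) n) ≤ ENNReal.ofReal a := by
          rw [← haE]
          exact le_trans (le_iSup (fun n => (S n).lipNorm ((f : Linf) n)) n) hflt.le
        exact h9.trans (ENNReal.ofReal_le_ofReal (by rw [ha]; linarith))
      have h8 : (‖(f : Linf) n‖₊ : ℝ≥0∞) ≤ ENNReal.ofReal R * ENNReal.ofReal 2 :=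
        le_trans h6 (mul_le_mul_right h7 _)
      rw [← ENNReal.ofReal_mul hR0.le, ← ofReal_norm_eq_coe_nnnorm] at h8
      have h10 := (ENNReal.ofReal_le_ofReal_iff (by positivity)).1 h8
      linarith
    have hainv1 : a⁻¹ ≤ 1 := by
      rw [inv_le_one_iff₀]
      right; exact ha1
    have hd : 1 - a⁻¹ = δ / a := by
      rw [eq_div_iff hapos.ne', sub_mul, inv_mul_cancel₀ hapos.ne', ha]
      ring
    have hda : δ / a ≤ δ := div_le_self hδpos.le ha1
    have hfnorm : ‖f‖ ≤ 2 * R := by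
      show ‖(f : Linf)‖ ≤ 2 * R
      rw [lp.norm_eq_ciSup]
      exact ciSup_le hfn2R
    have hfsub : ‖f - a⁻¹ • f‖ ≤ δ / a * (2 * R) := by
      have hss : f - a⁻¹ • f = (1 - a⁻¹) • f := by rw [sub_smul, one_smul]
      rw [hss, norm_smul, Real.norm_of_nonneg (by linarith), hd]
      exact mul_le_mul_of_nonneg_left hfnorm (div_nonneg hδpos.le hapos.le)
    have hkey : δ * (2 * R + 2) ≤ ε := by
      have := (le_div_iff₀ (by linarith : (0:ℝ) < 2 * R + 2)).1 hδ2
      linarith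
    rw [dist_eq_norm, ← hfq, hsub]
    calc ‖(Submodule.Quotient.mk (f - a⁻¹ • f) : LipUltraproduct X S U)‖
        ≤ ‖f - a⁻¹ • f‖ := Submodule.Quotient.norm_mk_le _ _
      _ ≤ δ / a * (2 * R) := hfsub
      _ ≤ δ * (2 * R) := mul_le_mul_of_nonneg_right hda (by linarith)
      _ < ε := by nlinarith
  have hfinal : {q | lipQ X S U q ≤ 1} = D := Set.Subset.antisymm hBD hDsub
  rw [hfinal]
  exact hDcomp

lemma dense_lipQ_finite : Dense {q : LipUltraproduct X S U | lipQ X S U q < ⊤} := by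
  rw [Metric.dense_iff]
  intro q ε hε
  obtain ⟨f, rfl⟩ := Submodule.Quotient.mk_surjective _ q
  have hf : (f : Linf) ∈ closure ((finLip X S : Set Linf)) := by
    rw [← Submodule.topologicalClosure_coe]
    exact f.2
  obtain ⟨g, hgmem, hgdist⟩ := Metric.mem_closure_iff.1 hf ε hε
  obtain ⟨C, hC⟩ := id hgmem
  set G : ↥(lipClosure X S) := ⟨g, Submodule.le_topologicalClosure _ hgmem⟩ with hG
  refine ⟨Submodule.Quotient.mk G, Metric.mem_ball.2 ?_, ?_⟩
  · rw [dist_eq_norm, ← Submodule.Quotient.mk_sub]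
    refine lt_of_le_of_lt (Submodule.Quotient.norm_mk_le _ _) ?_
    have : ‖G - f‖ = dist (f : Linf) g := by
      rw [dist_comm, dist_eq_norm]
      rfl
    rw [this]
    exact hgdist
  · refine lt_of_le_of_lt (lipQ_mk_le X S U G) ?_
    refine lt_of_le_of_lt (iSup_le fun n => ?_) (ENNReal.coe_lt_top (r := C))
    exact hC n

lemma eq_zero_of_lipQ_zero
    (hunif : ∀ ε : ℝ, 0 < ε → ∃ m : ℕ, ∀ n, ∃ t : Finset (X n),
      t.card ≤ m ∧ {x : X n | (S n).lipNorm x ≤ 1} ⊆ ⋃ c ∈ t, Metric.closedBall c ε)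
    (q : LipUltraproduct X S U) (h : lipQ X S U q = 0) : q = 0 := by
  obtain ⟨R, hR0, hR⟩ := exists_radius X S hunif
  refine eq_zero_of_norm_zero X S U q ?_
  have hb : ∀ ε : ℝ, 0 < ε → ‖q‖ ≤ ε := by
    intro ε hε
    have hlt : lipQ X S U q < ENNReal.ofReal (ε / R) := by
      rw [h]
      exact ENNReal.ofReal_pos.2 (div_pos hε hR0)
    obtain ⟨f, hfq, hflt⟩ := exists_rep_lt X S U q hlt
    have hn : ∀ n, ‖(f : Linf) n‖ ≤ ε := by
      intro n
      have h6 := nnnorm_le_radius (S n) hR0 (fun x hx => hR n x hx) ((f : Linf) n)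
      have h7 : (S n).lipNorm ((f : Linf) n) ≤ ENNReal.ofReal (ε / R) :=
        le_trans (le_iSup (fun n => (S n).lipNorm ((f : Linf) n)) n) hflt.le
      have h8 : (‖(f : Linf) n‖₊ : ℝ≥0∞) ≤ ENNReal.ofReal R * ENNReal.ofReal (ε / R) :=
        le_trans h6 (mul_le_mul_right h7 _)
      rw [← ENNReal.ofReal_mul hR0.le, ← ofReal_norm_eq_coe_nnnorm] at h8
      have h9 : R * (ε / R) = ε := by field_simp
      rw [h9] at h8
      exact (ENNReal.ofReal_le_ofReal_iff hε.le).1 h8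
    rw [← hfq]
    refine le_trans (Submodule.Quotient.norm_mk_le _ _) ?_
    show ‖(f : Linf)‖ ≤ ε
    rw [lp.norm_eq_ciSup]
    exact ciSup_le hn
  refine le_antisymm ?_ (norm_nonneg q)
  refine le_of_forall_pos_le_add fun ε hε => ?_
  rw [zero_add]
  exact hb ε hε

lemma tendsto_nnnorm_mk (f : ↥(lipClosure X S)) :
    Tendsto (fun n => (‖(f : Linf) n‖₊ : ℝ≥0∞)) (U : Filter ℕ)
      (nhds (‖(Submodule.Quotient.mk f : LipUltraproduct X S U)‖₊ : ℝ≥0∞)) := by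
  have h := (ENNReal.continuous_ofReal.tendsto _).comp (tendsto_norm_mk X S U f)
  erw [← ofReal_norm_eq_coe_nnnorm (Submodule.Quotient.mk f : LipUltraproduct X S U)]
  simpa only [Function.comp_def, ofReal_norm_eq_coe_nnnorm] using h

lemma nnnorm_le_rad (n : ℕ) (x : X n) :
    (‖x‖₊ : ℝ≥0∞) ≤ (⨆ z : {z : X n // z ≠ 0}, (‖z.1‖₊ : ℝ≥0∞) / (S n).lipNorm z.1)
      * (S n).lipNorm x := by
  set Rad := ⨆ z : {z : X n // z ≠ 0}, (‖z.1‖₊ : ℝ≥0∞) / (S n).lipNorm z.1 with hRad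
  rcases eq_or_ne x 0 with rfl | hx0
  · simp
  have hL0 : (S n).lipNorm x ≠ 0 := fun h => hx0 ((S n).lipNorm_eq_zero x h)
  rcases eq_or_ne ((S n).lipNorm x) ⊤ with hLt | hLt
  · rw [hLt]
    have hRad0 : Rad ≠ 0 := by
      intro hRz
      have hx : x ∈ closure {y : X n | (S n).lipNorm y < ⊤} := (S n).dense_finite x
      have hxpos : 0 < ‖x‖ := norm_pos_iff.2 hx0
      obtain ⟨y, hymem, hydist⟩ := Metric.mem_closure_iff.1 hx ‖x‖ hxpos
      have hy0 : y ≠ 0 := by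
        rintro rfl
        rw [dist_zero_right] at hydist
        exact lt_irrefl _ hydist
      have hratio : (‖y‖₊ : ℝ≥0∞) / (S n).lipNorm y ≤ Rad :=
        le_iSup (fun z : {z : X n // z ≠ 0} => (‖z.1‖₊ : ℝ≥0∞) / (S n).lipNorm z.1) ⟨y, hy0⟩
      rw [hRz, nonpos_iff_eq_zero, ENNReal.div_eq_zero_iff] at hratio
      rcases hratio with h1 | h2
      · exact hy0 (by simpa using h1)
      · exact absurd h2 hymem.ne
    rw [ENNReal.mul_top hRad0]
    exact le_top
  · have hratio : (‖x‖₊ : ℝ≥0∞) / (S n).lipNorm x ≤ Rad :=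
      le_iSup (fun z : {z : X n // z ≠ 0} => (‖z.1‖₊ : ℝ≥0∞) / (S n).lipNorm z.1) ⟨x, hx0⟩
    rw [ENNReal.div_le_iff hL0 hLt] at hratio
    exact hratio

lemma tendsto_radius
    (hunif : ∀ ε : ℝ, 0 < ε → ∃ m : ℕ, ∀ n, ∃ t : Finset (X n),
      t.card ≤ m ∧ {x : X n | (S n).lipNorm x ≤ 1} ⊆ ⋃ c ∈ t, Metric.closedBall c ε) :
    Tendsto (fun n => ⨆ x : {x : X n // x ≠ 0}, (‖x.1‖₊ : ℝ≥0∞) / (S n).lipNorm x.1)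
      (U : Filter ℕ)
      (nhds (⨆ q : {q : LipUltraproduct X S U // q ≠ 0},
        (‖q.1‖₊ : ℝ≥0∞) / lipQ X S U q.1)) := by
  classical
  obtain ⟨R, hR0, hR⟩ := exists_radius X S hunif
  set Rad : ℕ → ℝ≥0∞ :=
    fun n => ⨆ x : {x : X n // x ≠ 0}, (‖x.1‖₊ : ℝ≥0∞) / (S n).lipNorm x.1 with hRadDef
  have hRadle : ∀ n, Rad n ≤ ENNReal.ofReal R := by
    intro n
    refine iSup_le fun x => ?_
    have hL0 : (S n).lipNorm x.1 ≠ 0 := fun h => x.2 ((S n).lipNorm_eq_zero x.1 h)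
    rcases eq_or_ne ((S n).lipNorm x.1) ⊤ with ht | ht
    · rw [ht, ENNReal.div_top]
      exact zero_le
    · rw [ENNReal.div_le_iff hL0 ht]
      exact nnnorm_le_radius (S n) hR0 (fun y hy => hR n y hy) x.1
  obtain ⟨r, hrle, hr⟩ : ∃ r ≤ ENNReal.ofReal R,
      Tendsto Rad (U : Filter ℕ) (nhds r) := by
    obtain ⟨r, hmem, hrr⟩ :=
      (isClosed_Icc.isCompact : IsCompact (Set.Icc (0:ℝ≥0∞) (ENNReal.ofReal R))).ultrafilter_le_nhds
        (U.map Rad) (by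
          rw [Ultrafilter.coe_map, Filter.le_principal_iff, Filter.mem_map]
          exact Filter.univ_mem' fun n => ⟨zero_le, hRadle n⟩)
    rw [Ultrafilter.coe_map] at hrr
    exact ⟨r, hmem.2, hrr⟩
  have hrtop : r ≠ ⊤ := (lt_of_le_of_lt hrle ENNReal.ofReal_lt_top).ne
  suffices hEq : (⨆ q : {q : LipUltraproduct X S U // q ≠ 0},
      (‖q.1‖₊ : ℝ≥0∞) / lipQ X S U q.1) = r by
    rw [hEq]
    exact hr
  refine le_antisymm ?_ ?_
  · -- radius of the ultraproduct ≤ r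
    refine iSup_le ?_
    rintro ⟨q, hq0⟩
    dsimp only
    have hL0 : lipQ X S U q ≠ 0 := fun h => hq0 (eq_zero_of_lipQ_zero X S U hunif q h)
    rcases eq_or_ne (lipQ X S U q) ⊤ with ht | ht
    · rw [ht, ENNReal.div_top]
      exact zero_le
    rw [ENNReal.div_le_iff hL0 ht]
    -- show ‖q‖₊ ≤ r * lipQ q
    have hrL : r * lipQ X S U q ≠ ⊤ := ENNReal.mul_ne_top hrtop ht
    refine ENNReal.le_of_forall_pos_le_add fun ε hε _ => ?_
    set rN : ℝ≥0 := r.toNNReal with hrN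
    have hrcoe : (rN : ℝ≥0∞) = r := ENNReal.coe_toNNReal hrtop
    set ε' : ℝ≥0 := ε / (rN + 1) with hε'
    have hε'pos : 0 < ε' := by
      rw [hε']
      positivity
    have hlt : lipQ X S U q < lipQ X S U q + (ε' : ℝ≥0∞) :=
      ENNReal.lt_add_right ht (by exact_mod_cast hε'pos.ne')
    obtain ⟨f, hfq, hflt⟩ := exists_rep_lt X S U q hlt
    have hpt : ∀ n, (‖(f : Linf) n‖₊ : ℝ≥0∞) ≤ Rad n * (lipQ X S U q + (ε' : ℝ≥0∞)) := by
      intro n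
      refine le_trans (nnnorm_le_rad X S n ((f : Linf) n)) ?_
      refine mul_le_mul_right ?_ _
      exact le_trans (le_iSup (fun n => (S n).lipNorm ((f : Linf) n)) n) hflt.le
    have hmul : Tendsto (fun n => Rad n * (lipQ X S U q + (ε' : ℝ≥0∞))) (U : Filter ℕ)
        (nhds (r * (lipQ X S U q + (ε' : ℝ≥0∞)))) :=
      ENNReal.Tendsto.mul_const hr (Or.inr (by
        exact ENNReal.add_ne_top.2 ⟨ht, ENNReal.coe_ne_top⟩))
    have htd := tendsto_nnnorm_mk X S U f
    rw [hfq] at htd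
    have hkey : (‖q‖₊ : ℝ≥0∞) ≤ r * (lipQ X S U q + (ε' : ℝ≥0∞)) :=
      le_of_tendsto_of_tendsto' htd hmul hpt
    refine hkey.trans ?_
    rw [mul_add]
    refine add_le_add_right ?_ _
    -- r * ε' ≤ ε
    rw [← hrcoe, ← ENNReal.coe_mul, ENNReal.coe_le_coe, hε']
    calc rN * (ε / (rN + 1)) ≤ (rN + 1) * (ε / (rN + 1)) := by
          exact mul_le_mul_left (le_add_of_nonneg_right (zero_le)) _
      _ = ε := by
          rw [mul_comm]
          exact div_mul_cancel₀ _ (by positivity)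
  · -- r ≤ radius of the ultraproduct
    refine le_of_forall_lt fun c hc => ?_
    obtain ⟨r', hcr', hr'r⟩ := exists_between hc
    have hr'0 : r' ≠ 0 := by
      intro h
      rw [h] at hcr'
      exact not_lt_of_ge ((zero_le : 0 ≤ c)) hcr'
    have hr't : r' ≠ ⊤ := ((lt_of_lt_of_le hr'r hrle).trans ENNReal.ofReal_lt_top).ne
    have hAU : ∀ᶠ n in (U : Filter ℕ), r' < Rad n := hr.eventually (eventually_gt_nhds hr'r)
    have hsel : ∀ n, ∃ z : X n, (S n).lipNorm z ≤ 1 ∧ (r' < Rad n → r' ≤ (‖z‖₊ : ℝ≥0∞)) := by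
      intro n
      by_cases hn : r' < Rad n
      · have hn' := hn
        rw [hRadDef, lt_iSup_iff] at hn'
        obtain ⟨x, hx⟩ := hn'
        have hL0 : (S n).lipNorm x.1 ≠ 0 := fun h => x.2 ((S n).lipNorm_eq_zero x.1 h)
        have hLt : (S n).lipNorm x.1 ≠ ⊤ := by
          intro h
          rw [h, ENNReal.div_top] at hx
          exact not_lt_of_ge ((zero_le : 0 ≤ r')) hx
        set L := (S n).lipNorm x.1 with hL
        have hLpos : 0 < L.toReal := ENNReal.toReal_pos hL0 hLt
        have hcoe : ((‖(L.toReal)⁻¹‖₊ : ℝ≥0) : ℝ≥0∞) = L⁻¹ := by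
          rw [← ofReal_norm_eq_coe_nnnorm, Real.norm_of_nonneg (by positivity),
            ENNReal.ofReal_inv_of_pos hLpos, ENNReal.ofReal_toReal hLt]
        refine ⟨(L.toReal)⁻¹ • x.1, ?_, fun _ => ?_⟩
        · rw [(S n).lipNorm_smul, hcoe, ← hL, ENNReal.inv_mul_cancel hL0 hLt]
        · have hnn : (‖(L.toReal)⁻¹ • x.1‖₊ : ℝ≥0∞) = (‖x.1‖₊ : ℝ≥0∞) / L := by
            rw [nnnorm_smul, ENNReal.coe_mul, hcoe, ENNReal.div_eq_inv_mul]
          rw [hnn]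
          exact hx.le
      · exact ⟨0, by rw [(S n).lipNorm_zero]; exact zero_le, fun h => absurd h hn⟩
    choose y hylip hyr using hsel
    have hyb : ∀ n, ‖y n‖ ≤ R := fun n => hR n _ (hylip n)
    set F := ofSeq X S y hyb hylip with hF
    set q0 : LipUltraproduct X S U := Submodule.Quotient.mk F with hq0def
    have hlipq0 : lipQ X S U q0 ≤ 1 := by
      refine le_trans (lipQ_mk_le X S U F) (iSup_le fun n => ?_)
      exact hylip n
    have hq0nn : r' ≤ (‖q0‖₊ : ℝ≥0∞) := by
      have htd := tendsto_nnnorm_mk X S U F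
      refine ge_of_tendsto htd ?_
      refine hAU.mono fun n hn => ?_
      exact hyr n hn
    have hq0ne : q0 ≠ 0 := by
      intro h
      rw [h] at hq0nn
      erw [nnnorm_zero] at hq0nn
      simp only [ENNReal.coe_zero, nonpos_iff_eq_zero] at hq0nn
      exact hr'0 hq0nn
    refine lt_of_lt_of_le hcr' ?_
    refine le_trans ?_ (le_iSup (fun q : {q : LipUltraproduct X S U // q ≠ 0} =>
      (‖q.1‖₊ : ℝ≥0∞) / lipQ X S U q.1) ⟨q0, hq0ne⟩)
    calc r' ≤ (‖q0‖₊ : ℝ≥0∞) := hq0nn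
      _ = (‖q0‖₊ : ℝ≥0∞) / 1 := by simp
      _ ≤ (‖q0‖₊ : ℝ≥0∞) / lipQ X S U q0 := ENNReal.div_le_div_left hlipq0 _
end Aux


/-- If `(X_n)` is a uniform sequence of Lip-spaces and `U` is a free
ultrafilter on `ℕ`, then the Lip-ultraproduct `ℓ∞_L(X_n, U)`, with the quotient norm and
the quotient Lip-norm, is again a Lip-space (a Banach space whose Lip-norm is finite on a
dense subspace, is a norm there, and has compact unit ball); in particular
`{q : ‖q‖_{L,U} ≤ 1}` is compact in the quotient norm.  Moreover its radius equals
`lim_U R_n`, where `R_n = sup_{x ≠ 0} ‖x‖/‖x‖_L` is the radius of `X_n`. -/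
theorem stmt8 (hunif : ∀ ε : ℝ, 0 < ε → ∃ m : ℕ, ∀ n, ∃ t : Finset (X n),
      t.card ≤ m ∧ {x : X n | (S n).lipNorm x ≤ 1} ⊆ ⋃ c ∈ t, Metric.closedBall c ε)
    (hU : (U : Filter ℕ) ≤ Filter.cofinite) :
    (∀ q q' : LipUltraproduct X S U,
        lipQ X S U (q + q') ≤ lipQ X S U q + lipQ X S U q') ∧
      (∀ (c : ℝ) (q : LipUltraproduct X S U),
        lipQ X S U (c • q) = (‖c‖₊ : ℝ≥0∞) * lipQ X S U q) ∧
      (∀ q : LipUltraproduct X S U, lipQ X S U q = 0 → q = 0) ∧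
      (∀ q : LipUltraproduct X S U, ‖q‖ = 0 → q = 0) ∧
      CompleteSpace (LipUltraproduct X S U) ∧
      Dense {q : LipUltraproduct X S U | lipQ X S U q < ⊤} ∧
      IsCompact {q : LipUltraproduct X S U | lipQ X S U q ≤ 1} ∧
      Tendsto (fun n => ⨆ x : {x : X n // x ≠ 0}, (‖x.1‖₊ : ℝ≥0∞) / (S n).lipNorm x.1)
        (U : Filter ℕ)
        (nhds (⨆ q : {q : LipUltraproduct X S U // q ≠ 0},
          (‖q.1‖₊ : ℝ≥0∞) / lipQ X S U q.1)) := by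
  refine ⟨lipQ_add_le X S U, lipQ_smul X S U,
    fun q h => eq_zero_of_lipQ_zero X S U hunif q h,
    fun q h => eq_zero_of_norm_zero X S U q h,
    inferInstance,
    dense_lipQ_finite X S U,
    isCompact_lipBall X S U hunif hU,
    tendsto_radius X S U hunif⟩
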